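/- Suppose 1/2 < q_B < q_A < 1, fix a positive integer N, and let w, w′ ∈ [0,1) with w < w′ and N ≥ max(N*(w), N*(w′)). Then equilibrium welfare is strictly increasing in the motivation weight in state A and strictly decreasing in state B: P[ Binom(2N+1, q_A·σ*_N(w′)) ≥ N+1 ] > P[ Binom(2N+1, q_A·σ*_N(w)) ≥ N+1 ], and P[ Binom(2N+1, 1 − (1−q_B)·σ*_N(w′)) ≥ N+1 ] < P[ Binom(2N+1, 1 − (1−q_B)·σ*_N(w)) ≥ N+1 ]. -/

import Mathlib

/-- `ψ(w) = (1−w)(1−q_B)/(q_A + w(1−q_B))`. -/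
noncomputable def psi (qA qB w : ℝ) : ℝ := (1 - w) * (1 - qB) / (qA + w * (1 - qB))

/-- `N*(w) = ⌈ log ψ(w) / log (q_A(1−q_A)/(q_B(1−q_B))) ⌉`. -/
noncomputable def Nstar (qA qB w : ℝ) : ℤ :=
  ⌈Real.log (psi qA qB w) / Real.log (qA * (1 - qA) / (qB * (1 - qB)))⌉

/-- `σ*_N(w) = (q_A − ψ(w)^{1/N}(1−q_B)) / (q_A² − ψ(w)^{1/N}(1−q_B)²)`. -/
noncomputable def sigmaStar (N : ℕ) (qA qB w : ℝ) : ℝ :=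
  (qA - psi qA qB w ^ ((1 : ℝ) / N) * (1 - qB)) /
    (qA ^ 2 - psi qA qB w ^ ((1 : ℝ) / N) * (1 - qB) ^ 2)

/-- `P[Binom(2N+1, p) ≥ N+1]`. -/
noncomputable def majProb (N : ℕ) (p : ℝ) : ℝ :=
  ∑ j ∈ Finset.Icc (N + 1) (2 * N + 1),
    (Nat.choose (2 * N + 1) j : ℝ) * p ^ j * (1 - p) ^ (2 * N + 1 - j)

lemma term_hasDerivAt (n j : ℕ) (p : ℝ) :
    HasDerivAt (fun x : ℝ => (Nat.choose n j : ℝ) * x ^ j * (1 - x) ^ (n - j))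
      ((Nat.choose n j : ℝ) * ((j : ℝ) * p ^ (j - 1) * (1 - p) ^ (n - j)
        - ((n - j : ℕ) : ℝ) * p ^ j * (1 - p) ^ (n - j - 1))) p := by
  have h1 : HasDerivAt (fun x : ℝ => x ^ j) ((j : ℝ) * p ^ (j - 1)) p := hasDerivAt_pow j p
  have h2 : HasDerivAt (fun x : ℝ => (1 - x) ^ (n - j))
      (((n - j : ℕ) : ℝ) * (1 - p) ^ (n - j - 1) * (-1)) p := by
    exact (hasDerivAt_pow (n - j) (1 - p)).comp p
      (((hasDerivAt_const p (1:ℝ)).sub (hasDerivAt_id p)).congr_deriv (by ring))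
  have := ((h1.const_mul ((Nat.choose n j : ℝ))).fun_mul h2)
  exact this.congr_deriv (by ring)

lemma majProb_hasDerivAt (N : ℕ) (p : ℝ) :
    HasDerivAt (majProb N)
      ((Nat.choose (2 * N + 1) (N + 1) : ℝ) * (N + 1) * p ^ N * (1 - p) ^ N) p := by
  have h : HasDerivAt (fun x => ∑ j ∈ Finset.Icc (N + 1) (2 * N + 1),
      (Nat.choose (2 * N + 1) j : ℝ) * x ^ j * (1 - x) ^ (2 * N + 1 - j))
      (∑ j ∈ Finset.Icc (N + 1) (2 * N + 1),
        ((Nat.choose (2 * N + 1) j : ℝ) * ((j : ℝ) * p ^ (j - 1) * (1 - p) ^ (2 * N + 1 - j)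
          - ((2 * N + 1 - j : ℕ) : ℝ) * p ^ j * (1 - p) ^ (2 * N + 1 - j - 1)))) p :=
    HasDerivAt.fun_sum (fun j _ => term_hasDerivAt (2 * N + 1) j p)
  have hsum : (∑ j ∈ Finset.Icc (N + 1) (2 * N + 1),
        ((Nat.choose (2 * N + 1) j : ℝ) * ((j : ℝ) * p ^ (j - 1) * (1 - p) ^ (2 * N + 1 - j)
          - ((2 * N + 1 - j : ℕ) : ℝ) * p ^ j * (1 - p) ^ (2 * N + 1 - j - 1))))
      = (Nat.choose (2 * N + 1) (N + 1) : ℝ) * (N + 1) * p ^ N * (1 - p) ^ N := by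
    set n := 2 * N + 1 with hn
    set v : ℕ → ℝ := fun j => (Nat.choose n j : ℝ) * (j : ℝ) * p ^ (j - 1) * (1 - p) ^ (n - j)
      with hv
    have hterm : ∀ j ∈ Finset.Icc (N + 1) n,
        (Nat.choose n j : ℝ) * ((j : ℝ) * p ^ (j - 1) * (1 - p) ^ (n - j)
          - ((n - j : ℕ) : ℝ) * p ^ j * (1 - p) ^ (n - j - 1)) = v j - v (j + 1) := by
      intro j hj
      simp only [Finset.mem_Icc] at hj
      have hch : (Nat.choose n (j + 1) : ℝ) * ((j : ℝ) + 1)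
          = (Nat.choose n j : ℝ) * ((n - j : ℕ) : ℝ) := by
        exact_mod_cast congrArg (Nat.cast : ℕ → ℝ) (Nat.choose_succ_right_eq n j)
      simp only [hv]
      have hj1 : j + 1 - 1 = j := rfl
      rw [hj1, show n - (j + 1) = n - j - 1 from by omega]
      push_cast
      linear_combination (p ^ j * (1 - p) ^ (n - j - 1)) * hch
    rw [Finset.sum_congr rfl hterm]
    have hIcc : Finset.Icc (N + 1) n = Finset.Ico (N + 1) (n + 1) := by
      rw [← Finset.Ico_add_one_right_eq_Icc]
    rw [hIcc, Finset.sum_Ico_eq_sum_range]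
    have hcard : n + 1 - (N + 1) = N + 1 := by omega
    rw [hcard]
    have heq : ∀ i, v (N + 1 + i) - v (N + 1 + i + 1)
        = (fun i => v (N+1+i)) i - (fun i => v (N+1+i)) (i+1) := by
      intro i; simp [add_assoc]
    calc ∑ i ∈ Finset.range (N + 1), (v (N + 1 + i) - v (N + 1 + i + 1))
        = ∑ i ∈ Finset.range (N + 1),
            ((fun i => v (N+1+i)) i - (fun i => v (N+1+i)) (i+1)) :=
          Finset.sum_congr rfl (fun i _ => heq i)
      _ = v (N + 1 + 0) - v (N + 1 + (N + 1)) := Finset.sum_range_sub' _ _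
      _ = (Nat.choose n (N + 1) : ℝ) * (N + 1) * p ^ N * (1 - p) ^ N := by
          have h0 : N + 1 + (N + 1) = n + 1 := by omega
          have hz : Nat.choose n (n + 1) = 0 := Nat.choose_eq_zero_of_lt (by omega)
          simp only [hv]
          rw [show N + 1 + 0 = N + 1 from rfl, h0, hz,
            show N + 1 - 1 = N from rfl, show n - (N + 1) = N from by omega]
          push_cast; ring
  rw [← hsum]
  exact h

lemma majProb_strictMonoOn (N : ℕ) : StrictMonoOn (majProb N) (Set.Icc (0:ℝ) 1) := by
  apply strictMonoOn_of_deriv_pos (convex_Icc 0 1)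
  · exact fun x _ => (majProb_hasDerivAt N x).continuousAt.continuousWithinAt
  · intro x hx
    rw [interior_Icc, Set.mem_Ioo] at hx
    rw [(majProb_hasDerivAt N x).deriv]
    have hc : 0 < (Nat.choose (2 * N + 1) (N + 1) : ℝ) := by
      exact_mod_cast Nat.choose_pos (by omega)
    have h1 : 0 < (N : ℝ) + 1 := by positivity
    exact mul_pos (mul_pos (mul_pos hc h1) (pow_pos hx.1 N))
      (pow_pos (by linarith [hx.2]) N)

lemma sigma_lt_sigma (a b s t : ℝ) (hb : 0 < b) (hba : b < a)
    (hs : 0 < s) (hst : s < t) (ht1 : t < 1) :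
    (a - t * b) / (a ^ 2 - t * b ^ 2) < (a - s * b) / (a ^ 2 - s * b ^ 2) := by
  have ha : 0 < a := lt_trans hb hba
  have hds : 0 < a ^ 2 - s * b ^ 2 := by nlinarith
  have hdt : 0 < a ^ 2 - t * b ^ 2 := by nlinarith
  rw [div_lt_div_iff₀ hdt hds]
  nlinarith [mul_pos (mul_pos (mul_pos ha hb) (sub_pos.2 hba)) (sub_pos.2 hst)]

lemma sigma_lt_inv (a b t : ℝ) (hb : 0 < b) (hba : b < a)
    (ht : 0 < t) (ht1 : t < 1) :
    (a - t * b) / (a ^ 2 - t * b ^ 2) < 1 / a := by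
  have ha : 0 < a := lt_trans hb hba
  have hdt : 0 < a ^ 2 - t * b ^ 2 := by nlinarith
  rw [div_lt_div_iff₀ hdt ha]
  nlinarith [mul_pos (mul_pos ht hb) (sub_pos.2 hba)]

lemma inv_lt_sigma (a b t : ℝ) (hb : 0 < b) (hba : b < a)
    (ht : 0 < t) (ht1 : t < 1) :
    1 / (a + b) < (a - t * b) / (a ^ 2 - t * b ^ 2) := by
  have ha : 0 < a := lt_trans hb hba
  have hdt : 0 < a ^ 2 - t * b ^ 2 := by nlinarith
  rw [div_lt_div_iff₀ (by linarith) hdt]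
  nlinarith [mul_pos (mul_pos ha hb) (sub_pos.2 ht1)]

set_option maxHeartbeats 1000000 in
/-- **Proposition 2(ii)** (welfare comparative statics): for `N ≥ max(N*(w), N*(w′))` and
`w < w′`, equilibrium welfare is strictly larger under `w′` in state `A` and strictly
smaller under `w′` in state `B`. -/
theorem condorcet_welfare_comparative_statics (qA qB : ℝ)
    (hqB : 1 / 2 < qB) (hqBA : qB < qA) (hqA : qA < 1)
    (N : ℕ) (hN : 1 ≤ N) (w w' : ℝ)
    (hw0 : 0 ≤ w) (hww' : w < w') (hw'1 : w' < 1)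
    (hNw : Nstar qA qB w ≤ (N : ℤ)) (hNw' : Nstar qA qB w' ≤ (N : ℤ)) :
    majProb N (qA * sigmaStar N qA qB w) < majProb N (qA * sigmaStar N qA qB w') ∧
    majProb N (1 - (1 - qB) * sigmaStar N qA qB w') <
      majProb N (1 - (1 - qB) * sigmaStar N qA qB w) := by
  have hb : (0:ℝ) < 1 - qB := by linarith
  have hba : 1 - qB < qA := by linarith
  have ha : (0:ℝ) < qA := by linarith
  have hw1 : w < 1 := lt_trans hww' hw'1
  have hw'0 : 0 ≤ w' := le_of_lt (lt_of_le_of_lt hw0 hww')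
  -- ψ facts
  have hpsi_pos : ∀ x : ℝ, 0 ≤ x → x < 1 → 0 < psi qA qB x := by
    intro x hx0 hx1
    exact div_pos (mul_pos (by linarith) hb) (by nlinarith)
  have hpsi_lt1 : ∀ x : ℝ, 0 ≤ x → x < 1 → psi qA qB x < 1 := by
    intro x hx0 hx1
    rw [psi, div_lt_one (by nlinarith)]
    nlinarith
  have hpsi_anti : psi qA qB w' < psi qA qB w := by
    rw [psi, psi, div_lt_div_iff₀ (by nlinarith) (by nlinarith)]
    nlinarith [mul_pos (mul_pos hb (by linarith : (0:ℝ) < qA + (1 - qB)))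
      (sub_pos.2 hww')]
  -- t = ψ^(1/N)
  have hNr : (0:ℝ) < 1 / (N : ℝ) := by
    have : (0:ℝ) < (N : ℝ) := by exact_mod_cast hN
    positivity
  set tw := psi qA qB w ^ ((1 : ℝ) / N) with htw_def
  set tw' := psi qA qB w' ^ ((1 : ℝ) / N) with htw'_def
  have htw_pos : 0 < tw := Real.rpow_pos_of_pos (hpsi_pos w hw0 hw1) _
  have htw'_pos : 0 < tw' := Real.rpow_pos_of_pos (hpsi_pos w' hw'0 hw'1) _
  have htw_lt1 : tw < 1 :=
    Real.rpow_lt_one (le_of_lt (hpsi_pos w hw0 hw1)) (hpsi_lt1 w hw0 hw1) hNr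
  have htw'_lt1 : tw' < 1 :=
    Real.rpow_lt_one (le_of_lt (hpsi_pos w' hw'0 hw'1)) (hpsi_lt1 w' hw'0 hw'1) hNr
  have htlt : tw' < tw :=
    Real.rpow_lt_rpow (le_of_lt (hpsi_pos w' hw'0 hw'1)) hpsi_anti hNr
  -- σ* expressed via t
  have hσw : sigmaStar N qA qB w
      = (qA - tw * (1 - qB)) / (qA ^ 2 - tw * (1 - qB) ^ 2) := rfl
  have hσw' : sigmaStar N qA qB w'
      = (qA - tw' * (1 - qB)) / (qA ^ 2 - tw' * (1 - qB) ^ 2) := rfl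
  have hσlt : sigmaStar N qA qB w < sigmaStar N qA qB w' := by
    rw [hσw, hσw']
    exact sigma_lt_sigma qA (1 - qB) tw' tw hb hba htw'_pos htlt htw_lt1
  have hσw_lt : sigmaStar N qA qB w < 1 / qA := by
    rw [hσw]; exact sigma_lt_inv qA (1 - qB) tw hb hba htw_pos htw_lt1
  have hσw'_lt : sigmaStar N qA qB w' < 1 / qA := by
    rw [hσw']; exact sigma_lt_inv qA (1 - qB) tw' hb hba htw'_pos htw'_lt1
  have hσw_gt : 1 / (qA + (1 - qB)) < sigmaStar N qA qB w := by
    rw [hσw]; exact inv_lt_sigma qA (1 - qB) tw hb hba htw_pos htw_lt1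
  have hσw'_gt : 1 / (qA + (1 - qB)) < sigmaStar N qA qB w' := by
    rw [hσw']; exact inv_lt_sigma qA (1 - qB) tw' hb hba htw'_pos htw'_lt1
  have hinvpos : 0 < 1 / (qA + (1 - qB)) := by positivity
  have hσw_pos : 0 < sigmaStar N qA qB w := lt_trans hinvpos hσw_gt
  have hσw'_pos : 0 < sigmaStar N qA qB w' := lt_trans hinvpos hσw'_gt
  -- memberships and strict comparisons of success probabilities
  have hmul_lt_one : ∀ σ : ℝ, σ < 1 / qA → qA * σ < 1 := by
    intro σ h1
    have := mul_lt_mul_of_pos_left h1 ha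
    rwa [mul_one_div, div_self ha.ne'] at this
  have memA : ∀ σ : ℝ, 0 < σ → σ < 1 / qA → qA * σ ∈ Set.Icc (0:ℝ) 1 := by
    intro σ h0 h1
    exact ⟨by positivity, le_of_lt (hmul_lt_one σ h1)⟩
  have hbσ_lt_one : ∀ σ : ℝ, σ < 1 / qA → (1 - qB) * σ < 1 := by
    intro σ h1
    have h2 : qA * σ < 1 := hmul_lt_one σ h1
    nlinarith
  have memB : ∀ σ : ℝ, 0 < σ → σ < 1 / qA → 1 - (1 - qB) * σ ∈ Set.Icc (0:ℝ) 1 := by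
    intro σ h0 h1
    constructor
    · linarith [hbσ_lt_one σ h1]
    · nlinarith [mul_pos hb h0]
  constructor
  · exact majProb_strictMonoOn N (memA _ hσw_pos hσw_lt) (memA _ hσw'_pos hσw'_lt)
      (mul_lt_mul_of_pos_left hσlt ha)
  · exact majProb_strictMonoOn N (memB _ hσw'_pos hσw'_lt) (memB _ hσw_pos hσw_lt)
      (by nlinarith [mul_lt_mul_of_pos_left hσlt hb])
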